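/- arXiv:2403.04779 — 4 statements merged into one kernel-verified Lean document; each statement's English description precedes it below -/
import Mathlib

section
/- Under the uniform prior over the N+1 hypotheses on the urn's composition, if a sample of n balls drawn without replacement from the urn of N balls contains exactly k black balls, then the posterior probability of hypothesis H_i (that the urn initially contained i black balls) equals C(i, k)·C(N−i, n−k) / C(N+1, n+1). -/
lemma choose_conv (N m : ℕ) : ∀ k, ∑ j ∈ Finset.range (N + 1),
    j.choose k * (N - j).choose m = (N + 1).choose (k + m + 1) := by
  induction N with
  | zero =>
    intro k
    cases k with
    | zero =>
      cases m with
      | zero => simp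
      | succ m => simp [Nat.choose_eq_zero_of_lt]
    | succ k => simp [Nat.choose_eq_zero_of_lt]
  | succ N ih =>
    intro k
    cases k with
    | zero =>
      simp only [Nat.choose_zero_right, one_mul, Nat.zero_add]
      have h1 : ∑ j ∈ Finset.range (N + 2), (N + 1 - j).choose m
          = ∑ j ∈ Finset.range (N + 2), j.choose m := by
        simpa using Finset.sum_range_reflect (fun j => j.choose m) (N + 2)
      have h2 : ∑ j ∈ Finset.range (N + 2), j.choose m = (N + 2).choose (m + 1) := by
        rw [← Nat.sum_Icc_choose (N + 1) m]
        refine (Finset.sum_subset (fun x hx => Finset.mem_range.mpr ?_)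
          (fun x hx hnx => Nat.choose_eq_zero_of_lt ?_)).symm
        · simp only [Finset.mem_Icc] at hx; omega
        · simp only [Finset.mem_Icc] at hnx; simp only [Finset.mem_range] at hx; omega
      calc ∑ j ∈ Finset.range (N + 1 + 1), (N + 1 - j).choose m
          = ∑ j ∈ Finset.range (N + 2), j.choose m := h1
        _ = (N + 1 + 1).choose (m + 1) := h2
    | succ k =>
      rw [show k + 1 + m + 1 = (k + m + 1) + 1 from by ring]
      rw [Finset.sum_range_succ']
      have e : ∀ j, (j + 1).choose (k + 1) * (N + 1 - (j + 1)).choose m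
          = j.choose k * (N - j).choose m + j.choose (k + 1) * (N - j).choose m := by
        intro j
        rw [Nat.choose_succ_succ, add_mul, Nat.succ_sub_succ]
      rw [Finset.sum_congr rfl (fun j _ => e j), Finset.sum_add_distrib, ih k, ih (k + 1)]
      rw [Nat.choose_succ_succ (N + 1) (k + m + 1)]
      simp [Nat.choose_eq_zero_of_lt]
      ring

theorem posterior_urn (N n k i : ℕ) (hk : k ≤ n) (hn : n ≤ N) (hi : i ≤ N) :
    ((i.choose k * (N - i).choose (n - k) : ℝ) / (N.choose n) * (1 / ((N : ℝ) + 1))) /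
      (∑ j ∈ Finset.range (N + 1),
        (j.choose k * (N - j).choose (n - k) : ℝ) / (N.choose n) * (1 / ((N : ℝ) + 1)))
    = (i.choose k * (N - i).choose (n - k) : ℝ) / ((N + 1).choose (n + 1)) := by
  have hsum : (∑ j ∈ Finset.range (N + 1), (j.choose k * (N - j).choose (n - k) : ℕ))
      = (N + 1).choose (n + 1) := by
    rw [choose_conv N (n - k) k, show k + (n - k) + 1 = n + 1 from by omega]
  have hD : (N.choose n : ℝ) ≠ 0 := by
    exact_mod_cast (Nat.choose_pos hn).ne'
  have hE : ((N : ℝ) + 1) ≠ 0 := by positivity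
  have hS : ((N + 1).choose (n + 1) : ℝ) ≠ 0 := by
    exact_mod_cast (Nat.choose_pos (by omega : n + 1 ≤ N + 1)).ne'
  have hsum' : (∑ j ∈ Finset.range (N + 1), (j.choose k * (N - j).choose (n - k) : ℝ))
      = ((N + 1).choose (n + 1) : ℝ) := by exact_mod_cast congrArg Nat.cast hsum
  simp_rw [div_mul_div_comm, mul_one]
  rw [← Finset.sum_div, hsum']
  have hDE : ((N.choose n : ℝ) * ((N : ℝ) + 1)) ≠ 0 := mul_ne_zero hD hE
  field_simp
end

section
/- If the posterior over the urn composition after observing k black balls in n draws is Pr[H_i] = C(i,k)·C(N−i,n−k)/C(N+1,n+1), and given H_i the probability that the next ball drawn (without replacement) is black is (i−k)/(N−n), then the total probability that the next ball is black equals (k+1)/(n+2). -/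
open Finset

lemma laplace_aux (k : ℕ) : ∀ N m : ℕ,
    ∑ i ∈ Finset.range (N + 1), i.choose k * (N - i).choose m = (N + 1).choose (k + m + 1) := by
  intro N
  induction N with
  | zero =>
    intro m
    rcases k with _ | k <;> rcases m with _ | m <;>
      simp [Nat.choose_eq_zero_of_lt, Nat.choose]
  | succ N ih =>
    intro m
    rcases Nat.eq_zero_or_pos m with rfl | hm
    · -- m = 0 : hockey stick
      simp only [Nat.choose_zero_right, Nat.mul_one, Nat.add_zero]
      rw [← Nat.sum_Icc_choose (N + 1) k]
      refine (Finset.sum_subset ?_ ?_).symm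
      · intro x hx
        simp only [Finset.mem_Icc] at hx
        exact Finset.mem_range.mpr (by omega)
      · intro x hx1 hx2
        simp only [Finset.mem_range] at hx1
        simp only [Finset.mem_Icc, not_and, not_le] at hx2
        have : x < k := by omega
        exact Nat.choose_eq_zero_of_lt this
    · obtain ⟨m', rfl⟩ : ∃ m', m = m' + 1 := ⟨m - 1, by omega⟩
      rw [Finset.sum_range_succ]
      have h1 : ∀ i ∈ Finset.range (N + 1),
          i.choose k * (N + 1 - i).choose (m' + 1)
            = i.choose k * (N - i).choose (m' + 1) + i.choose k * (N - i).choose m' := by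
        intro i hi
        simp only [Finset.mem_range] at hi
        have hNi : N + 1 - i = (N - i) + 1 := by omega
        rw [hNi, Nat.choose_succ_succ', Nat.mul_add]
        ring
      rw [Finset.sum_congr rfl h1, Finset.sum_add_distrib, ih (m' + 1), ih m']
      have h0 : N + 1 - (N + 1) = 0 := by omega
      rw [h0, Nat.choose_eq_zero_of_lt (by omega : (0:ℕ) < m' + 1)]
      have he : k + (m' + 1) + 1 = (k + m' + 1) + 1 := by omega
      rw [he, Nat.choose_succ_succ' (N + 1)]
      ring

theorem laplace_succession (N n k : ℕ) (hk : k ≤ n) (hn : n < N) :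
    ∑ i ∈ Finset.range (N + 1),
        (((i : ℝ) - k) / ((N : ℝ) - n)) *
          ((i.choose k * (N - i).choose (n - k) : ℝ) / ((N + 1).choose (n + 1)))
      = ((k : ℝ) + 1) / ((n : ℝ) + 2) := by
  have hNn : ((N : ℝ) - n) ≠ 0 := by
    have : (n : ℝ) < N := by exact_mod_cast hn
    linarith
  have hC : (((N + 1).choose (n + 1) : ℕ) : ℝ) ≠ 0 := by
    have := Nat.choose_pos (show n + 1 ≤ N + 1 by omega)
    positivity
  have hterm : ∀ i : ℕ, ((i : ℝ) - k) * (i.choose k : ℝ) = ((k : ℝ) + 1) * (i.choose (k + 1) : ℝ) := by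
    intro i
    rcases lt_or_ge i k with h | h
    · rw [Nat.choose_eq_zero_of_lt h, Nat.choose_eq_zero_of_lt (by omega)]
      simp
    · have h1 := Nat.choose_succ_right_eq i k
      have h3 : ((i.choose (k + 1) : ℕ) : ℝ) * ((k : ℝ) + 1)
          = ((i.choose k : ℕ) : ℝ) * ((i - k : ℕ) : ℝ) := by exact_mod_cast h1
      rw [Nat.cast_sub h] at h3
      linarith
  have hsum : ∑ i ∈ Finset.range (N + 1),
      ((i.choose (k + 1) : ℝ) * ((N - i).choose (n - k) : ℝ))
      = ((N + 1).choose (n + 2) : ℝ) := by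
    have h := laplace_aux (k + 1) N (n - k)
    have he : (k + 1) + (n - k) + 1 = n + 2 := by omega
    rw [he] at h
    exact_mod_cast h
  have key : ∑ i ∈ Finset.range (N + 1),
        (((i : ℝ) - k) / ((N : ℝ) - n)) *
          ((i.choose k * (N - i).choose (n - k) : ℝ) / ((N + 1).choose (n + 1)))
      = (((k : ℝ) + 1) * ((N + 1).choose (n + 2) : ℝ))
          / (((N : ℝ) - n) * ((N + 1).choose (n + 1) : ℝ)) := by
    rw [← hsum, Finset.mul_sum, Finset.sum_div]
    refine Finset.sum_congr rfl fun i _ => ?_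
    rw [div_mul_div_comm]
    congr 1
    rw [← mul_assoc, ← mul_assoc, hterm i]
  rw [key]
  have hmain : ((N + 1).choose (n + 2) : ℝ) * ((n : ℝ) + 2)
      = ((N + 1).choose (n + 1) : ℝ) * ((N : ℝ) - n) := by
    have h := Nat.choose_succ_right_eq (N + 1) (n + 1)
    have h3 : (((N + 1).choose (n + 2) : ℕ) : ℝ) * ((n : ℝ) + 2)
        = (((N + 1).choose (n + 1) : ℕ) : ℝ) * ((N + 1 - (n + 1) : ℕ) : ℝ) := by
      exact_mod_cast h
    rw [Nat.cast_sub (by omega : n + 1 ≤ N + 1)] at h3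
    push_cast at h3 ⊢
    linarith
  have hn2 : ((n : ℝ) + 2) ≠ 0 := by positivity
  rw [div_eq_div_iff (by exact mul_ne_zero hNn hC) hn2]
  linear_combination ((k : ℝ) + 1) * hmain
end

section
/- With posterior Pr[H_i] = C(i,k)·C(N−i,n−k)/C(N+1,n+1) over the urn composition, the probability that a subsequent sample of n' balls drawn without replacement contains exactly k' black balls equals C(k+k', k)·C(n−k+n'−k', n−k) / C(n+n'+1, n+1). -/
/-- `C(m,p)·C(m−p,q) = C(p+q,p)·C(m,p+q)` for all naturals. -/
lemma choose_mul_choose_sub' (m p q : ℕ) :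
    m.choose p * (m - p).choose q = (p + q).choose p * m.choose (p + q) := by
  rcases le_or_gt (p + q) m with h | h
  · have := Nat.choose_mul (n := m) (k := p + q) (s := p) (Nat.le_add_right _ _)
    simpa [Nat.add_sub_cancel_left, mul_comm] using this.symm
  · rcases le_or_gt p m with hp | hp
    · have h1 : m - p < q := by omega
      rw [Nat.choose_eq_zero_of_lt h1, Nat.choose_eq_zero_of_lt h]
      ring
    · rw [Nat.choose_eq_zero_of_lt hp, Nat.choose_eq_zero_of_lt h]
      ring

/-- Hockey-stick on `range`. -/
lemma sum_range_choose_eq (N a : ℕ) :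
    ∑ i ∈ Finset.range (N + 1), i.choose a = (N + 1).choose (a + 1) := by
  rw [← Nat.sum_Icc_choose N a]
  refine (Finset.sum_subset ?_ ?_).symm
  · intro x hx
    simp only [Finset.mem_Icc] at hx
    simp only [Finset.mem_range]; omega
  · intro x hx hx'
    simp only [Finset.mem_range] at hx
    simp only [Finset.mem_Icc] at hx'
    exact Nat.choose_eq_zero_of_lt (by omega)

/-- Vandermonde with upper indices: `∑_{i=0}^{N} C(i,a)·C(N−i,b) = C(N+1,a+b+1)`. -/
lemma sum_choose_mul_choose (a : ℕ) :
    ∀ N b, ∑ i ∈ Finset.range (N + 1), i.choose a * (N - i).choose b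
      = (N + 1).choose (a + b + 1) := by
  intro N
  induction N with
  | zero =>
    intro b
    rcases b with _ | b
    · simpa using sum_range_choose_eq 0 a
    · simp only [Finset.sum_range_one, Nat.zero_sub, Nat.choose_zero_right]
      rw [Nat.choose_succ_succ]
      rcases a with _ | a <;> simp [Nat.choose_eq_zero_of_lt]
  | succ N ih =>
    intro b
    rcases b with _ | b
    · simpa using sum_range_choose_eq (N + 1) a
    · rw [Finset.sum_range_succ]
      have h0 : (N + 1 - (N + 1)).choose (b + 1) = 0 := by simp
      rw [h0, mul_zero, add_zero]
      have hsum : ∑ i ∈ Finset.range (N + 1), i.choose a * (N + 1 - i).choose (b + 1)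
          = ∑ i ∈ Finset.range (N + 1),
              (i.choose a * (N - i).choose b + i.choose a * (N - i).choose (b + 1)) := by
        refine Finset.sum_congr rfl fun i hi => ?_
        simp only [Finset.mem_range] at hi
        have : N + 1 - i = (N - i) + 1 := by omega
        rw [this, Nat.choose_succ_succ, Nat.mul_add]
      rw [hsum, Finset.sum_add_distrib, ih b, ih (b + 1)]
      have : a + (b + 1) + 1 = (a + b + 1) + 1 := by omega
      rw [this]
      exact (Nat.choose_succ_succ (N + 1) (a + b + 1)).symm

theorem posterior_predictive (N n k n' k' : ℕ) (hk : k ≤ n) (hk' : k' ≤ n')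
    (hN : n + n' ≤ N) :
    ∑ i ∈ Finset.range (N + 1),
        (((i - k).choose k' * (N - i - (n - k)).choose (n' - k') : ℝ) / ((N - n).choose n')) *
          ((i.choose k * (N - i).choose (n - k) : ℝ) / ((N + 1).choose (n + 1)))
      = ((k + k').choose k * (n - k + (n' - k')).choose (n - k) : ℝ) /
          ((n + n' + 1).choose (n + 1)) := by
  have hc1 : ((N - n).choose n' : ℝ) ≠ 0 := by
    exact_mod_cast Nat.choose_pos (by omega) |>.ne'
  have hc2 : (((N + 1).choose (n + 1)) : ℝ) ≠ 0 := by
    exact_mod_cast Nat.choose_pos (by omega) |>.ne'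
  have hc3 : (((n + n' + 1).choose (n + 1)) : ℝ) ≠ 0 := by
    exact_mod_cast Nat.choose_pos (by omega) |>.ne'
  -- Key natural number identity for the numerator sum
  have hnum : ∑ i ∈ Finset.range (N + 1),
      (i - k).choose k' * (N - i - (n - k)).choose (n' - k') *
        (i.choose k * (N - i).choose (n - k))
      = (k + k').choose k * (n - k + (n' - k')).choose (n - k) *
        (N + 1).choose (n + n' + 1) := by
    have step : ∀ i, (i - k).choose k' * (N - i - (n - k)).choose (n' - k') *
        (i.choose k * (N - i).choose (n - k))
        = ((k + k').choose k * (n - k + (n' - k')).choose (n - k)) *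
          (i.choose (k + k') * (N - i).choose ((n - k) + (n' - k'))) := by
      intro i
      have h1 : i.choose k * (i - k).choose k' = (k + k').choose k * i.choose (k + k') :=
        choose_mul_choose_sub' i k k'
      have h2 : (N - i).choose (n - k) * (N - i - (n - k)).choose (n' - k')
          = ((n - k) + (n' - k')).choose (n - k) * (N - i).choose ((n - k) + (n' - k')) :=
        choose_mul_choose_sub' (N - i) (n - k) (n' - k')
      calc (i - k).choose k' * (N - i - (n - k)).choose (n' - k') *
            (i.choose k * (N - i).choose (n - k))
          = (i.choose k * (i - k).choose k') *
            ((N - i).choose (n - k) * (N - i - (n - k)).choose (n' - k')) := by ring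
        _ = ((k + k').choose k * i.choose (k + k')) *
            (((n - k) + (n' - k')).choose (n - k) * (N - i).choose ((n - k) + (n' - k'))) := by
            rw [h1, h2]
        _ = _ := by ring
    rw [Finset.sum_congr rfl fun i _ => step i, ← Finset.mul_sum,
      sum_choose_mul_choose (k + k') N ((n - k) + (n' - k'))]
    have e : k + k' + (n - k + (n' - k')) = n + n' := by omega
    rw [e]
  -- combine the fractions
  have lhs_eq : ∑ i ∈ Finset.range (N + 1),
      (((i - k).choose k' * (N - i - (n - k)).choose (n' - k') : ℝ) / ((N - n).choose n')) *
        ((i.choose k * (N - i).choose (n - k) : ℝ) / ((N + 1).choose (n + 1)))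
      = ((∑ i ∈ Finset.range (N + 1),
          (i - k).choose k' * (N - i - (n - k)).choose (n' - k') *
            (i.choose k * (N - i).choose (n - k)) : ℕ) : ℝ) /
          (((N - n).choose n' : ℝ) * ((N + 1).choose (n + 1) : ℝ)) := by
    rw [Nat.cast_sum, Finset.sum_div]
    refine Finset.sum_congr rfl fun i _ => ?_
    push_cast
    rw [div_mul_div_comm]
  rw [lhs_eq, hnum]
  -- final chain identity: C(N+1,n+n'+1)·C(n+n'+1,n+1) = C(N+1,n+1)·C(N−n,n')
  have hchain : (N + 1).choose (n + n' + 1) * (n + n' + 1).choose (n + 1)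
      = (N + 1).choose (n + 1) * (N - n).choose n' := by
    have := Nat.choose_mul (n := N + 1) (k := n + n' + 1) (s := n + 1)
      (by omega)
    have e1 : N + 1 - (n + 1) = N - n := by omega
    have e2 : n + n' + 1 - (n + 1) = n' := by omega
    rwa [e1, e2] at this
  push_cast
  rw [div_eq_div_iff (by positivity) hc3]
  have : ((N + 1).choose (n + n' + 1) * (n + n' + 1).choose (n + 1) : ℝ)
      = ((N + 1).choose (n + 1) * (N - n).choose n' : ℝ) := by exact_mod_cast congrArg Nat.cast hchain
  linear_combination (((k + k').choose k : ℝ) * ((n - k + (n' - k')).choose (n - k) : ℝ)) * this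
end

section
/- For non-negative integers k ≤ n and m ≥ 0: Σ_{r=0}^{m} (k+r+1)·C(k+r, k)·C(n−k+m−r, n−k) = (k+1)·C(n+m+2, n+2). -/
open Finset

lemma hockey (b m : ℕ) :
    ∑ s ∈ range (m + 1), (b + s).choose s = (b + m + 1).choose m := by
  induction m with
  | zero => simp
  | succ m ih =>
    rw [Finset.sum_range_succ, ih]
    have h : b + (m + 1) + 1 = (b + m + 1) + 1 := by ring
    rw [h, Nat.choose_succ_succ]
    rfl

lemma conv (a : ℕ) : ∀ m b : ℕ,
    ∑ r ∈ range (m + 1), (a + r).choose r * (b + (m - r)).choose (m - r)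
      = (a + b + m + 1).choose m := by
  induction a with
  | zero =>
    intro m b
    simp only [Nat.zero_add, Nat.choose_self, one_mul]
    rw [← Finset.sum_range_reflect]
    simp only [Nat.add_sub_cancel]
    have hc : ∀ r ∈ range (m+1), (b + (m - (m - r))).choose (m - (m - r)) = (b + r).choose r := by
      intro r hr
      rw [Nat.sub_sub_self (by simp at hr; omega : r ≤ m)]
    rw [Finset.sum_congr rfl hc, hockey]
  | succ a iha =>
    intro m b
    induction m with
    | zero => simp
    | succ m ihm =>
      have hA := iha (m + 1) b
      rw [Finset.sum_range_succ'] at hA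
      simp only [Nat.succ_sub_succ, Nat.add_zero, Nat.choose_zero_right, one_mul,
        Nat.sub_zero, ← Nat.add_assoc] at hA
      have hA2 : ∑ x ∈ range (m + 1), (a + x + 1).choose (x + 1) * (b + (m - x)).choose (m - x)
          = ∑ x ∈ range (m + 1), (a + 1 + x).choose (x + 1) * (b + (m - x)).choose (m - x) :=
        Finset.sum_congr rfl (fun x _ => by rw [show a + x + 1 = a + 1 + x from by ring])
      rw [hA2] at hA
      rw [Finset.sum_range_succ']
      simp only [Nat.succ_sub_succ, Nat.choose_zero_right, one_mul, Nat.sub_zero,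
        ← Nat.add_assoc]
      have hsplit : ∀ s ∈ range (m+1),
          (a + 1 + s + 1).choose (s + 1) * (b + (m - s)).choose (m - s)
          = (a + 1 + s).choose s * (b + (m - s)).choose (m - s)
            + (a + 1 + s).choose (s + 1) * (b + (m - s)).choose (m - s) := by
        intro s _
        rw [Nat.choose_succ_succ, Nat.add_mul]
      rw [Finset.sum_congr rfl hsplit, Finset.sum_add_distrib, ihm]
      have hp : (a + 1 + b + m + 1 + 1).choose (m + 1)
          = (a + 1 + b + m + 1).choose m + (a + b + m + 1 + 1).choose (m + 1) := by
        have h2 : a + 1 + b + m + 1 + 1 = (a + b + m + 1 + 1) + 1 := by ring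
        have h3 : a + 1 + b + m + 1 = a + b + m + 1 + 1 := by ring
        rw [h2, h3, Nat.choose_succ_succ]
      omega

theorem beta_binomial_moment_sum (n k m : ℕ) (hk : k ≤ n) :
    ∑ r ∈ Finset.range (m + 1),
        (k + r + 1) * (k + r).choose k * (n - k + (m - r)).choose (n - k)
      = (k + 1) * (n + m + 2).choose (n + 2) := by
  have hterm : ∀ r ∈ range (m + 1),
      (k + r + 1) * (k + r).choose k * (n - k + (m - r)).choose (n - k)
        = (k + 1) * ((k + 1 + r).choose r * (n - k + (m - r)).choose (m - r)) := by
    intro r _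
    have h1 : (k + r + 1) * (k + r).choose k = (k + 1) * (k + 1 + r).choose r := by
      have hs := Nat.add_one_mul_choose_eq (k + r) k
      have hsym : (k + 1 + r).choose r = (k + r + 1).choose (k + 1) := by
        have := Nat.choose_symm (show k + 1 ≤ k + 1 + r by omega)
        rw [show k + 1 + r - (k + 1) = r by omega] at this
        rw [this, show k + 1 + r = k + r + 1 by ring]
      rw [hsym]
      rw [hs, Nat.mul_comm]
    have h2 : (n - k + (m - r)).choose (n - k) = (n - k + (m - r)).choose (m - r) := by
      have := Nat.choose_symm (show n - k ≤ n - k + (m - r) by omega)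
      rw [show n - k + (m - r) - (n - k) = m - r by omega] at this
      omega
    rw [h2, h1]
    ring
  rw [Finset.sum_congr rfl hterm, ← Finset.mul_sum, conv (k + 1) m (n - k)]
  congr 1
  rw [show k + 1 + (n - k) + m + 1 = n + m + 2 by omega]
  have := Nat.choose_symm (show n + 2 ≤ n + m + 2 by omega)
  rw [show n + m + 2 - (n + 2) = m by omega] at this
  omega
end
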